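/- The quantum Serre relations of the affine algebra hold under the evaluation map to U_q(sl₂): in any algebra with elements E, F, K satisfying the U_q(sl₂) relations, one has [E, [E, [E, F]_{q²}]]_{q⁻²} = 0 and [F, [F, [F, E]_{q⁻²}]]_{q²} = 0, where [X,Y]_p = XY − pYX and the middle bracket is the ordinary commutator [X,Y] = XY − YX. -/
import Mathlib


/-- The q-commutator `[X,Y]_p = XY − p·YX`. -/
def qComm {A : Type*} [Ring A] [Algebra ℂ A] (p : ℂ) (X Y : A) : A :=
  X * Y - p • (Y * X)

/-- Auxiliary symmetric form of the quantum Serre relation. -/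
lemma serre_aux {A : Type*} [Ring A] [Algebra ℂ A] (t c : ℂ) (ht : t ≠ 0)
    (E F Kp Km : A)
    (h1 : Kp * E = t • (E * Kp)) (h2 : Km * E = t⁻¹ • (E * Km))
    (hEF : E * F = F * E + c • Kp - c • Km) :
    qComm t⁻¹ E (E * qComm t E F - qComm t E F * E) = 0 := by
  have e2 : (E * F) * E = F * (E * E) + (c * t) • (E * Kp) - (c * t⁻¹) • (E * Km) := by
    rw [hEF, sub_mul, add_mul, smul_mul_assoc, smul_mul_assoc, h1, h2, mul_assoc]
    module
  have e1 : E * (E * F) = F * (E * E) + (c * t) • (E * Kp) + c • (E * Kp)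
      - (c * t⁻¹) • (E * Km) - c • (E * Km) := by
    rw [hEF, mul_sub, mul_add, mul_smul_comm, mul_smul_comm, ← mul_assoc, e2]
    module
  have hY : E * qComm t E F - qComm t E F * E = (c * (1 - t ^ 2)) • (E * Kp) := by
    rw [qComm, mul_sub, sub_mul, mul_smul_comm, smul_mul_assoc, ← mul_assoc E F E,
      mul_assoc F E E, e1, e2]
    match_scalars <;> (field_simp; try ring)
  rw [qComm, hY, mul_smul_comm, smul_mul_assoc, mul_assoc, h1, mul_smul_comm]
  match_scalars <;> (field_simp; try ring)

/-- The quantum Serre relations of the affine algebra hold under the evaluation map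
to `U_q(sl₂)`: `[E, [E, [E, F]_{q²}]]_{q⁻²} = 0` and `[F, [F, [F, E]_{q⁻²}]]_{q²} = 0`,
where the middle bracket is the ordinary commutator. -/
theorem quantum_serre_relations {A : Type*} [Ring A] [Algebra ℂ A]
    (q : ℂ) (hq0 : q ≠ 0) (hq2 : q ^ 2 ≠ 1) (E F : A) (K : Aˣ)
    (hKE : (K : A) * E * (↑K⁻¹ : A) = q ^ 2 • E)
    (hKF : (K : A) * F * (↑K⁻¹ : A) = (q ^ 2)⁻¹ • F)
    (hEF : E * F - F * E = (q - q⁻¹)⁻¹ • ((K : A) - (↑K⁻¹ : A))) :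
    qComm (q ^ (-2 : ℤ)) E (E * qComm (q ^ 2) E F - qComm (q ^ 2) E F * E) = 0 ∧
    qComm (q ^ 2) F (F * qComm (q ^ (-2 : ℤ)) F E - qComm (q ^ (-2 : ℤ)) F E * F) = 0 := by
  set t : ℂ := q ^ 2 with htdef
  have ht : t ≠ 0 := pow_ne_zero _ hq0
  set c : ℂ := (q - q⁻¹)⁻¹ with hcdef
  have hz : q ^ (-2 : ℤ) = t⁻¹ := by
    rw [htdef]; rw [zpow_neg, ← zpow_natCast q 2]; norm_num
  -- basic commutation relations
  have hKE' : (K : A) * E = t • (E * (K : A)) := by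
    have : ((K : A) * E * (↑K⁻¹ : A)) * (K : A) = (t • E) * (K : A) := by rw [hKE]
    simpa [mul_assoc, smul_mul_assoc] using this
  have hKiE : ((↑K⁻¹ : A)) * E = t⁻¹ • (E * (↑K⁻¹ : A)) := by
    have h : (↑K⁻¹ : A) * ((K : A) * E * (↑K⁻¹ : A)) = (↑K⁻¹ : A) * (t • E) := by rw [hKE]
    have h2 : t • ((↑K⁻¹ : A) * E) = E * (↑K⁻¹ : A) := by
      simpa [← mul_assoc, mul_smul_comm] using h.symm
    rw [← h2, smul_smul, inv_mul_cancel₀ ht, one_smul]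
  have hKF' : (K : A) * F = t⁻¹ • (F * (K : A)) := by
    have : ((K : A) * F * (↑K⁻¹ : A)) * (K : A) = (t⁻¹ • F) * (K : A) := by rw [hKF]
    simpa [mul_assoc, smul_mul_assoc] using this
  have hKiF : ((↑K⁻¹ : A)) * F = t • (F * (↑K⁻¹ : A)) := by
    have h : (↑K⁻¹ : A) * ((K : A) * F * (↑K⁻¹ : A)) = (↑K⁻¹ : A) * (t⁻¹ • F) := by rw [hKF]
    have h2 : t⁻¹ • ((↑K⁻¹ : A) * F) = F * (↑K⁻¹ : A) := by
      simpa [← mul_assoc, mul_smul_comm] using h.symm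
    rw [← h2, smul_smul, mul_inv_cancel₀ ht, one_smul]
  have hEF' : E * F = F * E + c • (K : A) - c • (↑K⁻¹ : A) := by
    have h := hEF
    rw [smul_sub] at h
    rw [eq_sub_iff_add_eq, ← sub_eq_iff_eq_add']
    abel_nf
    abel_nf at h
    linear_combination (norm := abel) h
  have hFE' : F * E = E * F + (-c) • (K : A) - (-c) • (↑K⁻¹ : A) := by
    rw [hEF']; module
  constructor
  · rw [hz]
    exact serre_aux t c ht E F (K : A) (↑K⁻¹ : A) hKE' hKiE hEF'
  · rw [hz]
    have := serre_aux t⁻¹ (-c) (inv_ne_zero ht) F E (K : A) (↑K⁻¹ : A) hKF'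
      (by rwa [inv_inv]) hFE'
    rwa [inv_inv] at this
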